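/- Let X be a Banach space, N a nest on X such that every N ∈ 𝒩 with N₋ = N is complemented in X. If T ∈ B(X) satisfies TF = 0 for every finite rank operator F in Alg𝒩, then T = 0. -/

import Mathlib

/-- Hahn–Banach: a continuous functional vanishing on a closed proper subspace and
nonzero at a given point outside it. -/
lemma exists_functional_vanishing {𝕜 X : Type*} [RCLike 𝕜] [NormedAddCommGroup X]
    [NormedSpace 𝕜 X] (P : Submodule 𝕜 X) (hP : IsClosed (P : Set X)) {z : X} (hz : z ∉ P) :
    ∃ φ : X →L[𝕜] 𝕜, φ z ≠ 0 ∧ ∀ x ∈ P, φ x = 0 := by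
  haveI : IsClosed (P : Set X) := hP
  let q : X →L[𝕜] X ⧸ P :=
    ⟨P.mkQ, continuous_quot_mk⟩
  have hq : q z ≠ 0 := by
    show P.mkQ z ≠ 0
    simpa [q, Submodule.Quotient.mk_eq_zero] using hz
  obtain ⟨g, -, hg⟩ := exists_dual_vector 𝕜 (q z) (norm_ne_zero_iff.mpr hq)
  refine ⟨g.comp q, ?_, fun x hx => ?_⟩
  · simp only [ContinuousLinearMap.comp_apply, hg]
    exact_mod_cast norm_ne_zero_iff.mpr hq
  · have : q x = 0 := by show P.mkQ x = 0; simpa [q, Submodule.Quotient.mk_eq_zero] using hx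
    simp [this]

/-- let 𝒩 be a nest on a Banach space X (a chain of closed subspaces
containing {0} and X, closed under intersections and closed linear spans) such that every
N ∈ 𝒩 with N₋ = N is complemented in X. If T ∈ B(X) satisfies TF = 0 for every finite
rank operator F in Alg𝒩, then T = 0. -/
theorem stmt14 {𝕜 X : Type*} [RCLike 𝕜] [NormedAddCommGroup X] [NormedSpace 𝕜 X]
    [CompleteSpace X]
    (𝒩 : Set (Submodule 𝕜 X))
    (hclosed : ∀ N ∈ 𝒩, IsClosed (N : Set X))
    (hbot : ⊥ ∈ 𝒩) (htop : ⊤ ∈ 𝒩)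
    (hchain : IsChain (· ≤ ·) 𝒩)
    (hinf : ∀ S ⊆ 𝒩, S.Nonempty → sInf S ∈ 𝒩)
    (hsup : ∀ S ⊆ 𝒩, S.Nonempty → (sSup S).topologicalClosure ∈ 𝒩)
    (hcompl : ∀ N ∈ 𝒩,
      (sSup {M ∈ 𝒩 | M < N}).topologicalClosure = N → Submodule.ClosedComplemented N)
    (T : X →L[𝕜] X)
    (hT : ∀ F : X →L[𝕜] X, (∀ N ∈ 𝒩, ∀ x ∈ N, F x ∈ N) →
      FiniteDimensional 𝕜 (LinearMap.range (F : X →ₗ[𝕜] X)) → T.comp F = 0) :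
    T = 0 := by
  -- Key claim: if N ∈ 𝒩 and the closure of the sup of its strict predecessors is proper,
  -- then T vanishes on N.
  have key : ∀ N ∈ 𝒩, (sSup {K ∈ 𝒩 | K < N}).topologicalClosure ≠ ⊤ →
      ∀ e ∈ N, T e = 0 := by
    intro N hN hne e he
    set P : Submodule 𝕜 X := (sSup {K ∈ 𝒩 | K < N}).topologicalClosure with hP
    obtain ⟨z, hz⟩ : ∃ z, z ∉ P := by
      by_contra h
      push_neg at h
      exact hne (Submodule.eq_top_iff'.mpr h)
    obtain ⟨φ, hφz, hφ0⟩ := exists_functional_vanishing P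
      (Submodule.isClosed_topologicalClosure _) hz
    -- the rank one operator x ↦ φ(x) • e
    set F : X →L[𝕜] X := φ.smulRight e with hF
    have halg : ∀ K ∈ 𝒩, ∀ x ∈ K, F x ∈ K := by
      intro K hK x hx
      rcases eq_or_ne K N with rfl | hKN
      · exact Submodule.smul_mem _ _ he
      · rcases hchain hK hN hKN with h | h
        · have hKmem : K ∈ {K ∈ 𝒩 | K < N} := ⟨hK, lt_of_le_of_ne h hKN⟩
          have hxP : x ∈ P :=
            Submodule.le_topologicalClosure _ (le_sSup hKmem hx)
          have hFx : F x = 0 := by simp [hF, hφ0 x hxP]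
          rw [hFx]; exact K.zero_mem
        · exact Submodule.smul_mem _ _ (h he)
    have hfin : FiniteDimensional 𝕜 (LinearMap.range (F : X →ₗ[𝕜] X)) := by
      have hle : LinearMap.range (F : X →ₗ[𝕜] X) ≤ 𝕜 ∙ e := by
        intro y hy
        obtain ⟨x, rfl⟩ := LinearMap.mem_range.mp hy
        exact Submodule.smul_mem _ _ (Submodule.mem_span_singleton_self e)
      exact Submodule.finiteDimensional_of_le hle
    have := hT F halg hfin
    have hTe : φ z • T e = 0 := by
      have := congrArg (fun G : X →L[𝕜] X => G z) this
      simpa [hF, F, map_smul] using this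
    exact (smul_eq_zero.mp hTe).resolve_left hφz
  -- Now apply to N = ⊤.
  by_cases hc : (sSup {K ∈ 𝒩 | K < ⊤}).topologicalClosure = ⊤
  · -- T vanishes on every proper member of 𝒩, hence on a dense subspace.
    have hker : ∀ K ∈ 𝒩, K < ⊤ → K ≤ LinearMap.ker (T : X →ₗ[𝕜] X) := by
      intro K hK hKt x hx
      have hKne : (sSup {L ∈ 𝒩 | L < K}).topologicalClosure ≠ ⊤ := by
        intro h
        have hle : (sSup {L ∈ 𝒩 | L < K}).topologicalClosure ≤ K := by
          refine Submodule.topologicalClosure_minimal _ ?_ (hclosed K hK)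
          exact sSup_le fun L hL => hL.2.le
        rw [h] at hle
        exact hKt.ne (top_le_iff.mp hle)
      exact key K hK hKne x hx
    have hdense : (sSup {K ∈ 𝒩 | K < ⊤}).topologicalClosure ≤ LinearMap.ker (T : X →ₗ[𝕜] X) := by
      refine Submodule.topologicalClosure_minimal _ ?_ ?_
      · exact sSup_le fun K hK => hker K hK.1 hK.2
      · exact ContinuousLinearMap.isClosed_ker T
    rw [hc] at hdense
    ext x
    simpa using hdense (Submodule.mem_top (x := x))
  · ext x
    simpa using key ⊤ htop hc x trivial
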